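/- Let H be a Hopf algebra, (K, r) a braided central Hopf subalgebra, π : H → K a cointegral with π(1) = 1 and ε∘π = ε, and let ν : H → Q := H/K⁺H be the canonical projection of coalgebras. Then j : Q → H, j(h̄) := π⁻¹(h₁)h₂, is a well-defined coalgebra section of ν, i.e. ν ∘ j = id_Q. -/

import Mathlib

open TensorProduct Coalgebra

namespace SectionJAux

variable {𝕜 H K : Type*} [Field 𝕜] [Ring H] [HopfAlgebra 𝕜 H]
  [Ring K] [HopfAlgebra 𝕜 K]

lemma sum_counit_smul {A : Type*} [AddCommGroup A] [Module 𝕜 A] [Coalgebra 𝕜 A]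
    {a : A} {τ : Type*} (repr : Coalgebra.Repr 𝕜 a τ) :
    ∑ i ∈ repr.index, counit (R := 𝕜) (repr.left i) • repr.right i = a := by
  have h := congrArg (TensorProduct.lid 𝕜 A) (Coalgebra.sum_counit_tmul_eq repr)
  simp only [map_sum, TensorProduct.lid_tmul, one_smul] at h
  exact h

lemma sum_smul_counit {A : Type*} [AddCommGroup A] [Module 𝕜 A] [Coalgebra 𝕜 A]
    {a : A} {τ : Type*} (repr : Coalgebra.Repr 𝕜 a τ) :
    ∑ i ∈ repr.index, counit (R := 𝕜) (repr.right i) • repr.left i = a := by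
  have h := congrArg (TensorProduct.rid 𝕜 A) (Coalgebra.sum_tmul_counit_eq repr)
  simp only [map_sum, TensorProduct.rid_tmul, one_smul] at h
  exact h

lemma mul_map_repr {A B : Type*} [AddCommGroup A] [Module 𝕜 A] [CoalgebraStruct 𝕜 A]
    [Ring B] [Algebra 𝕜 B] (f g : A →ₗ[𝕜] B) {a : A} {τ : Type*} (repr : Coalgebra.Repr 𝕜 a τ) :
    LinearMap.mul' 𝕜 B (TensorProduct.map f g (comul (R := 𝕜) a)) =
      ∑ i ∈ repr.index, f (repr.left i) * g (repr.right i) := by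
  rw [← repr.eq, map_sum, map_sum]
  simp

lemma comul_iota_mul (ι : K →ₐc[𝕜] H) (x : K) (h : H)
    {τ σ : Type*} (rx : Coalgebra.Repr 𝕜 x τ) (rh : Coalgebra.Repr 𝕜 h σ) :
    comul (R := 𝕜) (ι x * h) =
      ∑ i ∈ rx.index, ∑ j ∈ rh.index,
        (ι (rx.left i) * rh.left j) ⊗ₜ[𝕜] (ι (rx.right i) * rh.right j) := by
  rw [Bialgebra.comul_mul]
  have h1 : comul (R := 𝕜) (ι x) = TensorProduct.map (ι : K →ₗ[𝕜] H) (ι : K →ₗ[𝕜] H) (comul (R := 𝕜) x) :=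
    (CoalgHomClass.map_comp_comul_apply ι x).symm
  rw [h1, ← rx.eq, ← rh.eq, map_sum, Finset.sum_mul_sum]
  simp [Algebra.TensorProduct.tmul_mul_tmul]

lemma conv_on_prod (ι : K →ₐc[𝕜] H) (π πinv : H →ₗ[𝕜] K)
    (hconv₂ : ∀ h : H, LinearMap.mul' 𝕜 K (TensorProduct.map πinv π (comul (R := 𝕜) h))
      = counit (R := 𝕜) h • (1 : K))
    (x : K) (h : H) {τ σ : Type*} (rx : Coalgebra.Repr 𝕜 x τ) (rh : Coalgebra.Repr 𝕜 h σ) :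
    ∑ j ∈ rh.index, ∑ i ∈ rx.index,
      πinv (ι (rx.left i) * rh.left j) * π (ι (rx.right i) * rh.right j)
      = (counit (R := 𝕜) x * counit (R := 𝕜) h) • (1 : K) := by
  have e := hconv₂ (ι x * h)
  rw [comul_iota_mul ι x h rx rh, map_sum, map_sum] at e
  simp only [map_sum, TensorProduct.map_tmul, LinearMap.mul'_apply] at e
  rw [Finset.sum_comm] at e
  rw [e, Bialgebra.counit_mul, CoalgHomClass.counit_comp_apply]


lemma pinv_iota_mul (ι : K →ₐc[𝕜] H) (π πinv : H →ₗ[𝕜] K)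
    (hKlin : ∀ (x : K) (h : H), π (ι x * h) = x * π h)
    (hconv₁ : ∀ h : H, LinearMap.mul' 𝕜 K (TensorProduct.map π πinv (comul (R := 𝕜) h))
      = counit (R := 𝕜) h • (1 : K))
    (hconv₂ : ∀ h : H, LinearMap.mul' 𝕜 K (TensorProduct.map πinv π (comul (R := 𝕜) h))
      = counit (R := 𝕜) h • (1 : K))
    (x : K) (h : H) :
    πinv (ι x * h) = πinv h * HopfAlgebra.antipode (R := 𝕜) x := by
  have rx := ℛ 𝕜 x
  have rh := ℛ 𝕜 h
  have rx1 : ∀ i, Coalgebra.Repr 𝕜 (rx.left i) (K × K) := fun i => ℛ 𝕜 _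
  have rx2 : ∀ i, Coalgebra.Repr 𝕜 (rx.right i) (K × K) := fun i => ℛ 𝕜 _
  have rh1 : ∀ j, Coalgebra.Repr 𝕜 (rh.left j) (H × H) := fun j => ℛ 𝕜 _
  have rh2 : ∀ j, Coalgebra.Repr 𝕜 (rh.right j) (H × H) := fun j => ℛ 𝕜 _
  set S : K →ₗ[𝕜] K := HopfAlgebra.antipode (R := 𝕜) with hS
  -- coassociativity data
  have cox := Coalgebra.sum_tmul_tmul_eq rx rx1 rx2
  have coh := Coalgebra.sum_tmul_tmul_eq rh rh1 rh2
  -- the h-side shuffle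
  have key_h : ∀ (X₁ X₂ X₃ : K),
      (∑ j ∈ rh.index, ∑ t ∈ (rh2 j).index,
        πinv (ι X₁ * rh.left j) *
          (π (ι X₂ * (rh2 j).left t) * (πinv ((rh2 j).right t) * S X₃)))
      = ∑ j ∈ rh.index, ∑ t ∈ (rh1 j).index,
        πinv (ι X₁ * (rh1 j).left t) *
          (π (ι X₂ * (rh1 j).right t) * (πinv (rh.right j) * S X₃)) := by
    intro X₁ X₂ X₃
    have e := congrArg (LinearMap.mul' 𝕜 K ∘ₗ TensorProduct.map
        (πinv ∘ₗ LinearMap.mulLeft 𝕜 (ι X₁))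
        (LinearMap.mul' 𝕜 K ∘ₗ TensorProduct.map (π ∘ₗ LinearMap.mulLeft 𝕜 (ι X₂))
          ((LinearMap.mulRight 𝕜 (S X₃)) ∘ₗ πinv))) coh
    simpa only [map_sum, LinearMap.coe_comp, Function.comp_apply, TensorProduct.map_tmul,
      LinearMap.mul'_apply, LinearMap.mulLeft_apply, LinearMap.mulRight_apply] using e.symm
  -- the x-side shuffle
  have key_x : ∀ (c d e : H),
      (∑ i ∈ rx.index, ∑ s ∈ (rx2 i).index,
        πinv (ι (rx.left i) * c) *
          (π (ι ((rx2 i).left s) * d) * (πinv e * S ((rx2 i).right s))))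
      = ∑ i ∈ rx.index, ∑ s ∈ (rx1 i).index,
        πinv (ι ((rx1 i).left s) * c) *
          (π (ι ((rx1 i).right s) * d) * (πinv e * S (rx.right i))) := by
    intro c d e
    have e' := congrArg (LinearMap.mul' 𝕜 K ∘ₗ TensorProduct.map
        (πinv ∘ₗ LinearMap.mulRight 𝕜 c ∘ₗ ι.toLinearMap)
        (LinearMap.mul' 𝕜 K ∘ₗ TensorProduct.map (π ∘ₗ LinearMap.mulRight 𝕜 d ∘ₗ ι.toLinearMap)
          ((LinearMap.mulLeft 𝕜 (πinv e)) ∘ₗ S))) cox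
    simpa only [map_sum, LinearMap.coe_comp, Function.comp_apply, TensorProduct.map_tmul,
      LinearMap.mul'_apply, LinearMap.mulLeft_apply, LinearMap.mulRight_apply,
      BialgHom.coe_toLinearMap, BialgHom.toCoalgHom_apply, CoalgHom.toLinearMap_eq_coe,
      LinearMap.coe_coe] using e'.symm
  -- inner convolution identities
  have hconvR : ∀ j, ∑ t ∈ (rh2 j).index, π ((rh2 j).left t) * πinv ((rh2 j).right t)
      = counit (R := 𝕜) (rh.right j) • (1 : K) := fun j => by
    rw [← mul_map_repr π πinv (rh2 j)]; exact hconv₁ _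
  calc πinv (ι x * h)
      = ∑ i ∈ rx.index, ∑ j ∈ rh.index,
          (counit (R := 𝕜) (rx.right i) * counit (R := 𝕜) (rh.right j)) •
            πinv (ι (rx.left i) * rh.left j) := by
        conv_lhs => rw [show x = ∑ i ∈ rx.index, counit (R := 𝕜) (rx.right i) • rx.left i from
            (sum_smul_counit rx).symm,
          show h = ∑ j ∈ rh.index, counit (R := 𝕜) (rh.right j) • rh.left j from
            (sum_smul_counit rh).symm]
        rw [map_sum, Finset.sum_mul, map_sum]
        refine Finset.sum_congr rfl fun i _ => ?_
        rw [map_smul, smul_mul_assoc, Finset.mul_sum, map_smul, map_sum, Finset.smul_sum]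
        refine Finset.sum_congr rfl fun j _ => ?_
        rw [mul_smul_comm, map_smul, smul_smul]
    _ = ∑ i ∈ rx.index, ∑ j ∈ rh.index, ∑ s ∈ (rx2 i).index, ∑ t ∈ (rh2 j).index,
          πinv (ι (rx.left i) * rh.left j) *
            (π (ι ((rx2 i).left s) * (rh2 j).left t) *
              (πinv ((rh2 j).right t) * S ((rx2 i).right s))) := by
        refine Finset.sum_congr rfl fun i _ => Finset.sum_congr rfl fun j _ => ?_
        have inner_t : ∀ s ∈ (rx2 i).index,
            ∑ t ∈ (rh2 j).index, πinv (ι (rx.left i) * rh.left j) *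
              (π (ι ((rx2 i).left s) * (rh2 j).left t) *
                (πinv ((rh2 j).right t) * S ((rx2 i).right s)))
            = counit (R := 𝕜) (rh.right j) •
                (πinv (ι (rx.left i) * rh.left j) *
                  ((rx2 i).left s * S ((rx2 i).right s))) := by
          intro s _
          have step : ∑ t ∈ (rh2 j).index, πinv (ι (rx.left i) * rh.left j) *
              (π (ι ((rx2 i).left s) * (rh2 j).left t) *
                (πinv ((rh2 j).right t) * S ((rx2 i).right s)))
              = πinv (ι (rx.left i) * rh.left j) *
                ((rx2 i).left s *
                  ((∑ t ∈ (rh2 j).index, π ((rh2 j).left t) * πinv ((rh2 j).right t)) *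
                    S ((rx2 i).right s))) := by
            conv_rhs => rw [Finset.sum_mul, Finset.mul_sum, Finset.mul_sum]
            refine Finset.sum_congr rfl fun t _ => ?_
            rw [hKlin]
            simp only [mul_assoc]
          rw [step, hconvR j, smul_mul_assoc, one_mul, mul_smul_comm, mul_smul_comm]
        rw [Finset.sum_congr rfl inner_t, ← Finset.smul_sum, ← Finset.mul_sum,
          HopfAlgebra.sum_mul_antipode_eq_smul (rx2 i), mul_smul_comm, mul_one, smul_smul,
          mul_comm]
    _ = ∑ i ∈ rx.index, ∑ s ∈ (rx2 i).index, ∑ j ∈ rh.index, ∑ t ∈ (rh2 j).index,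
          πinv (ι (rx.left i) * rh.left j) *
            (π (ι ((rx2 i).left s) * (rh2 j).left t) *
              (πinv ((rh2 j).right t) * S ((rx2 i).right s))) :=
        Finset.sum_congr rfl fun i _ => Finset.sum_comm
    _ = ∑ i ∈ rx.index, ∑ s ∈ (rx2 i).index, ∑ j ∈ rh.index, ∑ t ∈ (rh1 j).index,
          πinv (ι (rx.left i) * (rh1 j).left t) *
            (π (ι ((rx2 i).left s) * (rh1 j).right t) *
              (πinv (rh.right j) * S ((rx2 i).right s))) :=
        Finset.sum_congr rfl fun i _ => Finset.sum_congr rfl fun s _ => key_h _ _ _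
    _ = ∑ j ∈ rh.index, ∑ t ∈ (rh1 j).index, ∑ i ∈ rx.index, ∑ s ∈ (rx2 i).index,
          πinv (ι (rx.left i) * (rh1 j).left t) *
            (π (ι ((rx2 i).left s) * (rh1 j).right t) *
              (πinv (rh.right j) * S ((rx2 i).right s))) := by
        rw [show (∑ i ∈ rx.index, ∑ s ∈ (rx2 i).index, ∑ j ∈ rh.index, ∑ t ∈ (rh1 j).index,
            πinv (ι (rx.left i) * (rh1 j).left t) *
              (π (ι ((rx2 i).left s) * (rh1 j).right t) *
                (πinv (rh.right j) * S ((rx2 i).right s))))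
            = ∑ i ∈ rx.index, ∑ j ∈ rh.index, ∑ s ∈ (rx2 i).index, ∑ t ∈ (rh1 j).index, _
          from Finset.sum_congr rfl fun i _ => Finset.sum_comm, Finset.sum_comm]
        refine Finset.sum_congr rfl fun j _ => ?_
        rw [show (∑ i ∈ rx.index, ∑ s ∈ (rx2 i).index, ∑ t ∈ (rh1 j).index,
            πinv (ι (rx.left i) * (rh1 j).left t) *
              (π (ι ((rx2 i).left s) * (rh1 j).right t) *
                (πinv (rh.right j) * S ((rx2 i).right s))))
            = ∑ i ∈ rx.index, ∑ t ∈ (rh1 j).index, ∑ s ∈ (rx2 i).index, _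
          from Finset.sum_congr rfl fun i _ => Finset.sum_comm, Finset.sum_comm]
    _ = ∑ j ∈ rh.index, ∑ t ∈ (rh1 j).index, ∑ i ∈ rx.index, ∑ s ∈ (rx1 i).index,
          πinv (ι ((rx1 i).left s) * (rh1 j).left t) *
            (π (ι ((rx1 i).right s) * (rh1 j).right t) *
              (πinv (rh.right j) * S (rx.right i))) :=
        Finset.sum_congr rfl fun j _ => Finset.sum_congr rfl fun t _ => key_x _ _ _
    _ = ∑ j ∈ rh.index, ∑ i ∈ rx.index, ∑ t ∈ (rh1 j).index, ∑ s ∈ (rx1 i).index,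
          πinv (ι ((rx1 i).left s) * (rh1 j).left t) *
            (π (ι ((rx1 i).right s) * (rh1 j).right t) *
              (πinv (rh.right j) * S (rx.right i))) :=
        Finset.sum_congr rfl fun j _ => Finset.sum_comm
    _ = ∑ j ∈ rh.index, ∑ i ∈ rx.index,
          (counit (R := 𝕜) (rx.left i) * counit (R := 𝕜) (rh.left j)) •
            (πinv (rh.right j) * S (rx.right i)) := by
        refine Finset.sum_congr rfl fun j _ => Finset.sum_congr rfl fun i _ => ?_
        have regroup : ∑ t ∈ (rh1 j).index, ∑ s ∈ (rx1 i).index,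
            πinv (ι ((rx1 i).left s) * (rh1 j).left t) *
              (π (ι ((rx1 i).right s) * (rh1 j).right t) *
                (πinv (rh.right j) * S (rx.right i)))
            = (∑ t ∈ (rh1 j).index, ∑ s ∈ (rx1 i).index,
                πinv (ι ((rx1 i).left s) * (rh1 j).left t) *
                  π (ι ((rx1 i).right s) * (rh1 j).right t)) *
                (πinv (rh.right j) * S (rx.right i)) := by
          rw [Finset.sum_mul]
          refine Finset.sum_congr rfl fun t _ => ?_
          rw [Finset.sum_mul]
          exact Finset.sum_congr rfl fun s _ => (mul_assoc _ _ _).symm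
        rw [regroup, conv_on_prod ι π πinv hconv₂ (rx.left i) (rh.left j) (rx1 i) (rh1 j),
          smul_mul_assoc, one_mul]
    _ = πinv h * S x := by
        have hx' := congrArg S (sum_counit_smul rx)
        rw [map_sum] at hx'
        simp only [map_smul] at hx'
        have hh' := congrArg πinv (sum_counit_smul rh)
        rw [map_sum] at hh'
        simp only [map_smul] at hh'
        calc ∑ j ∈ rh.index, ∑ i ∈ rx.index,
              (counit (R := 𝕜) (rx.left i) * counit (R := 𝕜) (rh.left j)) •
                (πinv (rh.right j) * S (rx.right i))
            = ∑ j ∈ rh.index, counit (R := 𝕜) (rh.left j) •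
                (πinv (rh.right j) * ∑ i ∈ rx.index,
                  counit (R := 𝕜) (rx.left i) • S (rx.right i)) := by
              refine Finset.sum_congr rfl fun j _ => ?_
              rw [Finset.mul_sum, Finset.smul_sum]
              refine Finset.sum_congr rfl fun i _ => ?_
              rw [mul_smul_comm, smul_smul, mul_comm]
          _ = (∑ j ∈ rh.index, counit (R := 𝕜) (rh.left j) • πinv (rh.right j)) * S x := by
              rw [hx', Finset.sum_mul]
              exact Finset.sum_congr rfl fun j _ => (smul_mul_assoc _ _ _).symm
          _ = πinv h * S x := by rw [hh']


lemma J_iota_mul (ι : K →ₐc[𝕜] H) (π πinv : H →ₗ[𝕜] K)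
    (hKlin : ∀ (x : K) (h : H), π (ι x * h) = x * π h)
    (hconv₁ : ∀ h : H, LinearMap.mul' 𝕜 K (TensorProduct.map π πinv (comul (R := 𝕜) h))
      = counit (R := 𝕜) h • (1 : K))
    (hconv₂ : ∀ h : H, LinearMap.mul' 𝕜 K (TensorProduct.map πinv π (comul (R := 𝕜) h))
      = counit (R := 𝕜) h • (1 : K))
    (x : K) (h : H) :
    LinearMap.mul' 𝕜 H (TensorProduct.map (ι.toLinearMap ∘ₗ πinv) LinearMap.id
        (comul (R := 𝕜) (ι x * h)))
      = counit (R := 𝕜) x • LinearMap.mul' 𝕜 H (TensorProduct.map (ι.toLinearMap ∘ₗ πinv)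
          LinearMap.id (comul (R := 𝕜) h)) := by
  have rx := ℛ 𝕜 x
  have rh := ℛ 𝕜 h
  set S : K →ₗ[𝕜] K := HopfAlgebra.antipode (R := 𝕜) with hS
  have hRHS : LinearMap.mul' 𝕜 H (TensorProduct.map (ι.toLinearMap ∘ₗ πinv) LinearMap.id
      (comul (R := 𝕜) h)) = ∑ j ∈ rh.index, ι (πinv (rh.left j)) * rh.right j := by
    rw [mul_map_repr (ι.toLinearMap ∘ₗ πinv) LinearMap.id rh]
    simp only [LinearMap.coe_comp, Function.comp_apply, LinearMap.id_coe, id_eq,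
      BialgHom.coe_toLinearMap]
    rfl
  rw [comul_iota_mul ι x h rx rh, hRHS]
  simp only [map_sum, TensorProduct.map_tmul, LinearMap.mul'_apply, LinearMap.coe_comp,
    Function.comp_apply, LinearMap.id_coe, id_eq, BialgHom.coe_toLinearMap]
  calc ∑ i ∈ rx.index, ∑ j ∈ rh.index,
        ι (πinv (ι (rx.left i) * rh.left j)) * (ι (rx.right i) * rh.right j)
      = ∑ i ∈ rx.index, ∑ j ∈ rh.index,
          ι (πinv (rh.left j)) * (ι (S (rx.left i) * rx.right i) * rh.right j) := by
        refine Finset.sum_congr rfl fun i _ => Finset.sum_congr rfl fun j _ => ?_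
        rw [pinv_iota_mul ι π πinv hKlin hconv₁ hconv₂, map_mul, map_mul]
        simp only [mul_assoc]
        rfl
    _ = ∑ j ∈ rh.index, ι (πinv (rh.left j)) *
          ((∑ i ∈ rx.index, ι (S (rx.left i) * rx.right i)) * rh.right j) := by
        rw [Finset.sum_comm]
        refine Finset.sum_congr rfl fun j _ => ?_
        conv_rhs => rw [Finset.sum_mul, Finset.mul_sum]
    _ = counit (R := 𝕜) x • ∑ j ∈ rh.index, ι (πinv (rh.left j)) * rh.right j := by
        rw [← map_sum, HopfAlgebra.sum_antipode_mul_eq_smul rx, map_smul, map_one,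
          Finset.smul_sum]
        refine Finset.sum_congr rfl fun j _ => ?_
        rw [smul_mul_assoc, one_mul, mul_smul_comm]

lemma counit_pinv (π πinv : H →ₗ[𝕜] K)
    (hconv₁ : ∀ h : H, LinearMap.mul' 𝕜 K (TensorProduct.map π πinv (comul (R := 𝕜) h))
      = counit (R := 𝕜) h • (1 : K))
    (hεπ : ∀ h : H, counit (R := 𝕜) (π h) = counit (R := 𝕜) h) (h : H) :
    counit (R := 𝕜) (πinv h) = counit (R := 𝕜) h := by
  have rh := ℛ 𝕜 h
  have e := congrArg (counit (R := 𝕜) (A := K)) (hconv₁ h)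
  rw [mul_map_repr π πinv rh, map_sum] at e
  simp only [Bialgebra.counit_mul, hεπ, map_smul, Bialgebra.counit_one, smul_eq_mul,
    mul_one] at e
  have e2 := congrArg (counit (R := 𝕜) (A := K)) (congrArg πinv (sum_counit_smul rh))
  rw [map_sum, map_sum] at e2
  simp only [map_smul, smul_eq_mul] at e2
  exact e2.symm.trans e

lemma mk_iota_mul (ι : K →ₐc[𝕜] H) {N : Submodule 𝕜 H}
    (hN : N = Submodule.span 𝕜
      {y : H | ∃ x : K, ∃ h : H, counit (R := 𝕜) x = 0 ∧ y = ι x * h})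
    (k : K) (a : H) :
    (Submodule.Quotient.mk (ι k * a) : H ⧸ N)
      = counit (R := 𝕜) k • Submodule.Quotient.mk a := by
  have hmem : ι (k - counit (R := 𝕜) k • 1) * a ∈ N := by
    rw [hN]
    exact Submodule.subset_span ⟨k - counit (R := 𝕜) k • 1, a, by simp, rfl⟩
  have hsplit : ι k * a = ι (k - counit (R := 𝕜) k • 1) * a + counit (R := 𝕜) k • a := by
    rw [map_sub, map_smul, map_one, sub_mul, smul_mul_assoc, one_mul, sub_add_cancel]
  rw [hsplit, Submodule.Quotient.mk_add, (Submodule.Quotient.mk_eq_zero N).mpr hmem, zero_add,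
    Submodule.Quotient.mk_smul]

end SectionJAux


/-- For a braided central Hopf subalgebra with a normalized cointegral π,
the map j(h̄) = π⁻¹(h₁)h₂ is a well-defined section of the projection ν : H → H/K⁺H. -/
theorem section_j_well_defined
    {𝕜 H K : Type*} [Field 𝕜] [Ring H] [HopfAlgebra 𝕜 H]
    [Ring K] [HopfAlgebra 𝕜 K]
    (ι : K →ₐc[𝕜] H) (hι : Function.Injective ι)
    (r : H →ₗ[𝕜] K →ₗ[𝕜] 𝕜)
    -- (2.1): r(hh', k) = r(h', k₁) r(h, k₂)
    (h21 : ∀ (h h' : H) (x : K), r (h * h') x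
      = LinearMap.mul' 𝕜 𝕜 (TensorProduct.map (r h') (r h) (Coalgebra.comul (R := 𝕜) x)))
    -- (2.2): r(h, kk') = r(h₁, k) r(h₂, k')
    (h22 : ∀ (h : H) (x y : K), r h (x * y)
      = LinearMap.mul' 𝕜 𝕜 (TensorProduct.map (r.flip x) (r.flip y) (Coalgebra.comul (R := 𝕜) h)))
    -- (2.3): r(h,1) = ε(h), r(1,k) = ε(k)
    (h23a : ∀ h : H, r h 1 = Coalgebra.counit (R := 𝕜) h)
    (h23b : ∀ x : K, r 1 x = Coalgebra.counit (R := 𝕜) x)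
    -- (2.4): r(h₁, k₁) k₂ h₂ = h₁ k₁ r(h₂, k₂)
    (h24 : ∀ (h : H) (x : K),
      (TensorProduct.lid 𝕜 H) (TensorProduct.map (TensorProduct.lift r)
          ((LinearMap.mul' 𝕜 H) ∘ₗ (TensorProduct.map ι.toLinearMap LinearMap.id)
            ∘ₗ (TensorProduct.comm 𝕜 H K).toLinearMap)
          ((TensorProduct.tensorTensorTensorComm 𝕜 H H K K)
            (Coalgebra.comul (R := 𝕜) h ⊗ₜ[𝕜] Coalgebra.comul (R := 𝕜) x)))
        = (TensorProduct.rid 𝕜 H) (TensorProduct.map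
            ((LinearMap.mul' 𝕜 H) ∘ₗ (TensorProduct.map LinearMap.id ι.toLinearMap))
            (TensorProduct.lift r)
            ((TensorProduct.tensorTensorTensorComm 𝕜 H H K K)
              (Coalgebra.comul (R := 𝕜) h ⊗ₜ[𝕜] Coalgebra.comul (R := 𝕜) x))))
    -- (2.5): r(k, k') = ε(k)ε(k')
    (h25 : ∀ x y : K, r (ι x) y = Coalgebra.counit (R := 𝕜) x * Coalgebra.counit (R := 𝕜) y)
    -- π is a cointegral with π(1) = 1 and ε ∘ π = ε
    (π πinv : H →ₗ[𝕜] K)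
    (hKlin : ∀ (x : K) (h : H), π (ι x * h) = x * π h)
    (hconv₁ : ∀ h : H, LinearMap.mul' 𝕜 K (TensorProduct.map π πinv (Coalgebra.comul (R := 𝕜) h))
      = Coalgebra.counit (R := 𝕜) h • (1 : K))
    (hconv₂ : ∀ h : H, LinearMap.mul' 𝕜 K (TensorProduct.map πinv π (Coalgebra.comul (R := 𝕜) h))
      = Coalgebra.counit (R := 𝕜) h • (1 : K))
    (hπ1 : π 1 = 1)
    (hεπ : ∀ h : H, Coalgebra.counit (R := 𝕜) (π h) = Coalgebra.counit (R := 𝕜) h) :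
    ∀ N : Submodule 𝕜 H,
      N = Submodule.span 𝕜
        {y : H | ∃ x : K, ∃ h : H, Coalgebra.counit (R := 𝕜) x = 0 ∧ y = ι x * h} →
      ∃ j : (H ⧸ N) →ₗ[𝕜] H,
        -- j(h̄) = π⁻¹(h₁) h₂
        (∀ h : H, j (Submodule.Quotient.mk h)
          = (LinearMap.mul' 𝕜 H) (TensorProduct.map (ι.toLinearMap ∘ₗ πinv) LinearMap.id
              (Coalgebra.comul (R := 𝕜) h)))
        -- ν ∘ j = id
        ∧ (∀ q : H ⧸ N, Submodule.Quotient.mk (j q) = q) := by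

  intro N hN
  set J : H →ₗ[𝕜] H := LinearMap.mul' 𝕜 H ∘ₗ
      TensorProduct.map (ι.toLinearMap ∘ₗ πinv) LinearMap.id ∘ₗ
      (Coalgebra.comul (R := 𝕜) (A := H)) with hJ
  have hle : N ≤ LinearMap.ker J := by
    rw [hN, Submodule.span_le]
    rintro y ⟨x, a, hx, rfl⟩
    simp only [SetLike.mem_coe, LinearMap.mem_ker, hJ, LinearMap.coe_comp, Function.comp_apply]
    rw [SectionJAux.J_iota_mul ι π πinv hKlin hconv₁ hconv₂ x a, hx, zero_smul]
  refine ⟨N.liftQ J hle, fun h => ?_, fun q => ?_⟩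
  · rw [Submodule.liftQ_apply, hJ]
    simp [LinearMap.comp_apply]
  · obtain ⟨h, rfl⟩ := Submodule.Quotient.mk_surjective N q
    rw [Submodule.liftQ_apply, hJ]
    simp only [LinearMap.coe_comp, Function.comp_apply]
    have rh := Coalgebra.Repr.arbitrary 𝕜 h
    rw [SectionJAux.mul_map_repr (ι.toLinearMap ∘ₗ πinv) LinearMap.id rh]
    have hterm : ∀ j ∈ rh.index,
        (Submodule.Quotient.mk ((ι.toLinearMap ∘ₗ πinv) (rh.left j)
            * (LinearMap.id : H →ₗ[𝕜] H) (rh.right j)) : H ⧸ N)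
          = Coalgebra.counit (R := 𝕜) (rh.left j) • Submodule.Quotient.mk (rh.right j) := by
      intro j _
      have hrfl : ((ι.toLinearMap ∘ₗ πinv) (rh.left j) * (LinearMap.id : H →ₗ[𝕜] H) (rh.right j))
          = ι (πinv (rh.left j)) * rh.right j := rfl
      rw [hrfl, SectionJAux.mk_iota_mul ι hN (πinv (rh.left j)) (rh.right j),
        SectionJAux.counit_pinv π πinv hconv₁ hεπ]
    have hsum : (Submodule.Quotient.mk (∑ j ∈ rh.index,
          (ι.toLinearMap ∘ₗ πinv) (rh.left j) * (LinearMap.id : H →ₗ[𝕜] H) (rh.right j)) : H ⧸ N)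
        = ∑ j ∈ rh.index, (Submodule.Quotient.mk ((ι.toLinearMap ∘ₗ πinv) (rh.left j)
            * (LinearMap.id : H →ₗ[𝕜] H) (rh.right j)) : H ⧸ N) := by
      rw [← Submodule.mkQ_apply, map_sum]
      simp [Submodule.mkQ_apply]
    rw [hsum, Finset.sum_congr rfl hterm]
    have hfin := congrArg (N.mkQ) (SectionJAux.sum_counit_smul rh)
    rw [map_sum] at hfin
    simp only [map_smul, Submodule.mkQ_apply] at hfin
    exact hfin
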